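/- For every t = 0,…,T−1, one has H_t(s_t − θ) ≥ H_t(S_t) + K_t. -/

import Mathlib

open MeasureTheory Filter Set


/-- A convex function is nonincreasing to the left of a global minimizer. -/
lemma convex_anti_left {C : ℝ → ℝ} (hC : ConvexOn ℝ Set.univ C) {m : ℝ}
    (hm : ∀ y, C m ≤ C y) {x y : ℝ} (hxy : x ≤ y) (hym : y ≤ m) : C y ≤ C x := by
  rcases eq_or_lt_of_le hxy with rfl | hxy
  · exact le_rfl
  rcases eq_or_lt_of_le hym with rfl | hym
  · exact hm x
  have hz : y ∈ openSegment ℝ x m := by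
    rw [openSegment_eq_Ioo (lt_trans hxy hym)]
    exact ⟨hxy, hym⟩
  exact hC.le_left_of_right_le (Set.mem_univ x) (Set.mem_univ m) hz (hm y)

lemma grid_step {θ : ℝ} (hθ : 0 < θ) {a b : ℤ} (h : (a : ℝ) * θ ≤ (b : ℝ) * θ)
    (hne : (a : ℝ) * θ ≠ (b : ℝ) * θ) : (a : ℝ) * θ + θ ≤ (b : ℝ) * θ := by
  have hab : a ≤ b := by
    have := (mul_le_mul_iff_of_pos_right hθ).mp h
    exact_mod_cast this
  have hab' : a ≠ b := by
    rintro rfl; exact hne rfl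
  have : a + 1 ≤ b := by omega
  have : ((a : ℝ) + 1) ≤ (b : ℝ) := by exact_mod_cast this
  nlinarith

theorem stmt10
    (T : ℕ) (hT : 2 ≤ T)
    (α : ℝ) (hα0 : 0 < α) (hα1 : α ≤ 1)
    (K : ℕ → ℝ) (hK0 : ∀ t, t < T → 0 ≤ K t)
    (hKmono : ∀ t, t + 2 ≤ T → α * K (t + 1) ≤ K t)
    (ν : ℕ → MeasureTheory.Measure ℝ)
    (hprob : ∀ t, MeasureTheory.IsProbabilityMeasure (ν t))
    (hpos : ∀ t, ν t (Set.Iio 0) = 0)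
    (F : ℕ → ℝ → ℝ) (hF : ∀ t x, F t x = (ν t (Set.Iic x)).toReal)
    (C : ℕ → ℝ → ℝ)
    (hCconv : ∀ t, t < T → ConvexOn ℝ Set.univ (C t))
    (hCcoer : ∀ t, t < T → Filter.Tendsto (C t) (Filter.cocompact ℝ) Filter.atTop)
    (θ : ℝ) (hθ : 0 < θ)
    (f : ℕ → ℤ → ℝ)
    (hf : ∀ t (n : ℤ), f t n = F t (((n : ℝ) + 1) * θ) - F t ((n : ℝ) * θ))
    (Cm SU : ℕ → ℝ)
    (hCm : ∀ t, t < T → IsLeast {x | ∀ y, C t x ≤ C t y} (Cm t))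
    (hSU : ∀ t, t < T → ∀ n0 : ℤ, (n0 : ℝ) * θ < Cm t → Cm t ≤ ((n0 : ℝ) + 1) * θ →
      IsLeast {w | (∃ m : ℤ, w = (m : ℝ) * θ) ∧ Cm t ≤ w ∧ C t ((n0 : ℝ) * θ) + K t < C t w} (SU t))
    (s S : ℕ → ℝ) (I Ibar : ℕ → ℝ)
    (hsT1a : s (T - 1) ≤ Cm (T - 1))
    (hsT1b : C (T - 1) (s (T - 1)) = C (T - 1) (Cm (T - 1)) + K (T - 1))
    (hIbarT1 : Ibar (T - 1) = s (T - 1))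
    (hI : ∀ t, t + 2 ≤ T →
      IsGreatest {w | (∃ m : ℤ, w = (m : ℝ) * θ) ∧ w < min (Ibar (t + 1) - θ) (Cm t)} (I t))
    (hIbar : ∀ t, t + 2 ≤ T →
      IsGreatest {w | (∃ m : ℤ, w = (m : ℝ) * θ) ∧ w ≤ I t ∧ C t (I t) + K t < C t w} (Ibar t - θ))
    (H V : ℕ → ℝ → ℝ)
    (hHT1 : ∀ y, H (T - 1) y = C (T - 1) y)
    (hST1 : S (T - 1) = Cm (T - 1))
    (hV : ∀ t, t < T → ∀ y, V t y = if y < s t then H t (S t) + K t else H t y)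
    (hHrec : ∀ t, t + 2 ≤ T → ∀ y,
      H t y = C t y + α * ∑' n : ℕ, V (t + 1) (y - ((n : ℝ) - 1) * θ) * f t ((n : ℤ) - 1))
    (hSdef : ∀ t, t + 2 ≤ T →
      IsGreatest {w | (∃ m : ℤ, w = (m : ℝ) * θ) ∧ I t ≤ w ∧ w ≤ SU t ∧
        ∀ u, (∃ n : ℤ, u = (n : ℝ) * θ) → I t ≤ u → u ≤ SU t → H t w ≤ H t u} (S t))
    (hsdef0 : ∀ t, t + 2 ≤ T → K t = 0 → s t = S t)
    (hsdef1 : ∀ t, t + 2 ≤ T → 0 < K t →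
      IsLeast {w | (∃ m : ℤ, w = (m : ℝ) * θ) ∧ Ibar t ≤ w ∧ w ≤ S t ∧ H t w ≤ H t (S t) + K t} (s t))
    :
    ∀ t, t < T → H t (S t) + K t ≤ H t (s t - θ) := by
  intro t ht
  by_cases hlast : t + 2 ≤ T
  · -- recursive case
    obtain ⟨⟨⟨mS, hmS⟩, hIS, hSSU, hSmin⟩, hSub⟩ := hSdef t hlast
    obtain ⟨⟨⟨mI, hmI⟩, hImin⟩, hIub⟩ := hI t hlast
    obtain ⟨⟨⟨mIb, hmIb⟩, hIbleI, hCIb⟩, hIbub⟩ := hIbar t hlast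
    have hIlt := lt_min_iff.mp hImin
    have ht1 : t + 1 < T := by omega
    -- Ibar (t+1) ≤ s (t+1)
    have hIbs : Ibar (t + 1) ≤ s (t + 1) := by
      by_cases hTend : t + 3 ≤ T
      · by_cases hK1 : K (t + 1) = 0
        · -- s(t+1) = S(t+1) ≥ I(t+1) ≥ Ibar(t+1)
          obtain ⟨⟨⟨mS1, hmS1⟩, hIS1, _, _⟩, _⟩ := hSdef (t + 1) (by omega)
          obtain ⟨⟨⟨mI1, hmI1⟩, hImin1⟩, _⟩ := hI (t + 1) (by omega)
          obtain ⟨⟨⟨mIb1, hmIb1⟩, hIble1, hCIb1⟩, _⟩ := hIbar (t + 1) (by omega)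
          have hne : Ibar (t + 1) - θ ≠ I (t + 1) := by
            intro h
            rw [h, hK1, add_zero] at hCIb1
            exact lt_irrefl _ hCIb1
          have hle' : (mIb1 : ℝ) * θ ≤ (mI1 : ℝ) * θ := by
            rw [← hmIb1, ← hmI1]; exact hIble1
          have hne' : (mIb1 : ℝ) * θ ≠ (mI1 : ℝ) * θ := by
            rw [← hmIb1, ← hmI1]; exact hne
          have : Ibar (t + 1) - θ + θ ≤ I (t + 1) := by
            rw [hmIb1, hmI1]
            exact grid_step hθ hle' hne' 
          rw [hsdef0 (t + 1) (by omega) hK1]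
          linarith
        · have hKpos1 : 0 < K (t + 1) :=
            lt_of_le_of_ne (hK0 (t + 1) (by omega)) (Ne.symm hK1)
          obtain ⟨⟨_, hIbs1, _, _⟩, _⟩ := hsdef1 (t + 1) (by omega) hKpos1
          exact hIbs1
      · have hTeq : T - 1 = t + 1 := by omega
        rw [← hTeq, hIbarT1]
    -- For y ≤ I t, H t y = C t y + Q
    have hHform : ∀ y : ℝ, y ≤ I t → H t y = C t y +
        α * ∑' n : ℕ, (H (t + 1) (S (t + 1)) + K (t + 1)) * f t ((n : ℤ) - 1) := by
      intro y hy
      rw [hHrec t hlast y]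
      congr 2
      apply tsum_congr
      intro n
      congr 1
      rw [hV (t + 1) ht1]
      rw [if_pos]
      have h1 : (-1 : ℝ) * θ ≤ ((n : ℝ) - 1) * θ := by
        apply mul_le_mul_of_nonneg_right _ hθ.le
        have : (0 : ℝ) ≤ (n : ℝ) := Nat.cast_nonneg n
        linarith
      have h2 : I t < Ibar (t + 1) - θ := hIlt.1
      linarith
    by_cases hK : K t = 0
    · rw [hsdef0 t hlast hK, hK, add_zero]
      by_cases hge : I t ≤ S t - θ
      · exact hSmin (S t - θ) ⟨mS - 1, by push_cast [hmS]; ring⟩ hge (by linarith)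
      · push_neg at hge
        have hSI : S t = I t := by
          rcases eq_or_lt_of_le hIS with h | h
          · exact h.symm
          · exfalso
            have h' : (mI : ℝ) * θ < (mS : ℝ) * θ := by rw [← hmI, ← hmS]; exact h
            have := grid_step hθ h'.le (ne_of_lt h')
            rw [← hmI, ← hmS] at this
            linarith
        rw [hSI, hHform (I t) le_rfl, hHform (I t - θ) (by linarith)]
        have hconv : C t (I t) ≤ C t (I t - θ) :=
          convex_anti_left (hCconv t ht) (hCm t ht).1 (by linarith) (le_of_lt hIlt.2)
        linarith
    · have hKpos : 0 < K t := lt_of_le_of_ne (hK0 t ht) (Ne.symm hK)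
      obtain ⟨⟨⟨ms, hms⟩, hIbars, hsS, hHs⟩, hslb⟩ := hsdef1 t hlast hKpos
      by_cases hge : Ibar t ≤ s t - θ
      · by_contra hcon
        push_neg at hcon
        have : s t ≤ s t - θ :=
          hslb ⟨⟨ms - 1, by push_cast [hms]; ring⟩, hge, by linarith, le_of_lt hcon⟩
        linarith
      · push_neg at hge
        have hsIbar : s t = Ibar t := by
          rcases eq_or_lt_of_le hIbars with h | h
          · exact h.symm
          · exfalso
            have hIb_grid : Ibar t = ((mIb + 1 : ℤ) : ℝ) * θ := by push_cast; linarith [hmIb]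
            have h' : ((mIb + 1 : ℤ) : ℝ) * θ < (ms : ℝ) * θ := by
              rw [← hIb_grid, ← hms]; exact h
            have := grid_step hθ h'.le (ne_of_lt h')
            rw [← hIb_grid, ← hms] at this
            linarith
        have h1 : H t (S t) ≤ H t (I t) :=
          hSmin (I t) ⟨mI, hmI⟩ le_rfl (le_trans hIS hSSU)
        have h2 := hHform (Ibar t - θ) hIbleI
        have h3 := hHform (I t) le_rfl
        rw [hsIbar]
        linarith
  · -- terminal case : t = T - 1
    have ht1 : t = T - 1 := by omega
    subst ht1
    rw [hHT1, hHT1, hST1]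
    have hconv : C (T - 1) (s (T - 1)) ≤ C (T - 1) (s (T - 1) - θ) :=
      convex_anti_left (hCconv (T - 1) ht) (hCm (T - 1) ht).1 (by linarith) hsT1a
    linarith [hsT1b]
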